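/- Fix P_U and define f(γ) as the infimum of I(R;U,X) over all conditional distributions P_{RX|U} such that I(R;U)=I(X;U)=H(U|X,R)=0 and H(X)=log|𝒰|+γ. Then for every γ ≥ 0 the feasible set is non-empty, and f is non-increasing in γ on [0,∞). -/

import Mathlib

open Finset
open scoped Classical

/-- Shannon entropy of a (finitely supported) mass function on a countable
alphabet. -/
noncomputable def entC {α : Type*} (q : α → ℝ) : ℝ :=
  ∑' a, Real.negMulLog (q a)

/-- Feasibility of a joint mass function `p` of `(U,R,X)` (with key and
ciphertext alphabets embedded in `ℕ`) for the tradeoff problem: `p` is a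
finitely supported probability mass function whose `U`-marginal is the given
`P_U`, satisfying `I(R;U) = I(X;U) = H(U|X,R) = 0` and
`H(X) = log|𝒰| + γ`. -/
noncomputable def Feasible {𝒰 : Type*} [Fintype 𝒰]
    (PU : 𝒰 → ℝ) (γ : ℝ) (p : 𝒰 → ℕ → ℕ → ℝ) : Prop :=
  (∀ u r x, 0 ≤ p u r x)
  ∧ (Function.support fun t : 𝒰 × ℕ × ℕ => p t.1 t.2.1 t.2.2).Finite
  ∧ (∀ u, (∑' (r : ℕ), ∑' (x : ℕ), p u r x) = PU u)
  -- `I(X;U) = 0`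
  ∧ (∀ u x, (∑' (r : ℕ), p u r x) = PU u * (∑' (u' : 𝒰), ∑' (r : ℕ), p u' r x))
  -- `I(R;U) = 0`
  ∧ (∀ u r, (∑' (x : ℕ), p u r x) = PU u * (∑' (u' : 𝒰), ∑' (x : ℕ), p u' r x))
  -- `H(U|X,R) = 0`
  ∧ (∃ g : ℕ → ℕ → 𝒰, ∀ u r x, p u r x ≠ 0 → u = g r x)
  -- `H(X) = log|𝒰| + γ`
  ∧ (entC (fun x : ℕ => ∑' (u : 𝒰), ∑' (r : ℕ), p u r x)
      = Real.log ((univ.filter fun u => PU u ≠ 0).card) + γ)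

/-- Expected key consumption `I(R;U,X) = H(R) + H(U,X) − H(U,R,X)`. -/
noncomputable def keyCost {𝒰 : Type*} [Fintype 𝒰] (p : 𝒰 → ℕ → ℕ → ℝ) : ℝ :=
  entC (fun r : ℕ => ∑' (u : 𝒰), ∑' (x : ℕ), p u r x)
    + entC (fun t : 𝒰 × ℕ => ∑' (r : ℕ), p t.1 r t.2)
    - entC (fun t : 𝒰 × ℕ × ℕ => p t.1 t.2.1 t.2.2)

set_option linter.unusedSectionVars false

section Helpers

variable {α β : Type*}

lemma summable_fs {f : α → ℝ} (h : (Function.support f).Finite) : Summable f :=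
  summable_of_finite_support h

lemma tsum_ne_zero_imp {f : α → ℝ} (h : (∑' a, f a) ≠ 0) : ∃ a, f a ≠ 0 := by
  by_contra hc; push_neg at hc; exact h (by simp [funext hc])

lemma entC_eq_sum {f : α → ℝ} {s : Finset α} (h : ∀ a ∉ s, f a = 0) :
    entC f = ∑ a ∈ s, Real.negMulLog (f a) :=
  tsum_eq_sum (fun a ha => by rw [h a ha, Real.negMulLog_zero])

lemma entC_comp_equiv (e : β ≃ α) (f : α → ℝ) :
    entC (fun b => f (e b)) = entC f :=
  e.tsum_eq (fun a => Real.negMulLog (f a))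

lemma tsum_prod_fs {f : α × β → ℝ} (h : (Function.support f).Finite) :
    ∑' w : α × β, f w = ∑' a, ∑' b, f (a, b) := by
  refine Summable.tsum_prod' (summable_fs h) (fun a => summable_fs ?_)
  refine Set.Finite.subset (h.image Prod.snd) ?_
  intro b hb
  exact ⟨(a, b), hb, rfl⟩

lemma entC_prod {f : α → ℝ} {g : β → ℝ}
    (hf : (Function.support f).Finite) (hg : (Function.support g).Finite)
    (hf1 : ∑' a, f a = 1) (hg1 : ∑' b, g b = 1) :
    entC (fun w : α × β => f w.1 * g w.2) = entC f + entC g := by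
  classical
  set s := hf.toFinset with hs
  set t := hg.toFinset with ht
  have hfz : ∀ a ∉ s, f a = 0 := by
    intro a ha; by_contra h; exact ha (hf.mem_toFinset.2 h)
  have hgz : ∀ b ∉ t, g b = 0 := by
    intro b hb; by_contra h; exact hb (hg.mem_toFinset.2 h)
  have hfs : ∑ a ∈ s, f a = 1 := by rw [← hf1]; exact (tsum_eq_sum hfz).symm
  have hgs : ∑ b ∈ t, g b = 1 := by rw [← hg1]; exact (tsum_eq_sum hgz).symm
  have hsupp : ∀ w : α × β, w ∉ s ×ˢ t → f w.1 * g w.2 = 0 := by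
    intro w hw
    rw [Finset.mem_product, not_and_or] at hw
    rcases hw with h | h
    · rw [hfz _ h, zero_mul]
    · rw [hgz _ h, mul_zero]
  rw [entC_eq_sum hsupp, entC_eq_sum hfz, entC_eq_sum hgz, Finset.sum_product]
  have key : ∀ a ∈ s, ∑ b ∈ t, Real.negMulLog (f a * g b)
      = Real.negMulLog (f a) + f a * ∑ b ∈ t, Real.negMulLog (g b) := by
    intro a _
    have : ∀ b ∈ t, Real.negMulLog (f a * g b)
        = g b * Real.negMulLog (f a) + f a * Real.negMulLog (g b) := fun b _ =>
      Real.negMulLog_mul (f a) (g b)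
    rw [Finset.sum_congr rfl this, Finset.sum_add_distrib, ← Finset.sum_mul, hgs, one_mul,
      ← Finset.mul_sum]
  rw [Finset.sum_congr rfl key, Finset.sum_add_distrib, ← Finset.sum_mul, hfs, one_mul]

lemma entC_subadd {P : α × β → ℝ} (hnn : ∀ w, 0 ≤ P w)
    (hfin : (Function.support P).Finite) (htot : ∑' w, P w = 1) :
    entC P ≤ entC (fun a => ∑' b, P (a, b)) + entC (fun b => ∑' a, P (a, b)) := by
  classical
  set s : Finset α := hfin.toFinset.image Prod.fst with hsdef
  set t : Finset β := hfin.toFinset.image Prod.snd with htdef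
  have hmem : ∀ w : α × β, P w ≠ 0 → w.1 ∈ s ∧ w.2 ∈ t := by
    intro w hw
    have hw' : w ∈ hfin.toFinset := hfin.mem_toFinset.2 hw
    exact ⟨Finset.mem_image.2 ⟨w, hw', rfl⟩, Finset.mem_image.2 ⟨w, hw', rfl⟩⟩
  have hz : ∀ w : α × β, w ∉ s ×ˢ t → P w = 0 := by
    intro w hw
    by_contra h
    exact hw (Finset.mem_product.2 (hmem w h))
  set A : α → ℝ := fun a => ∑' b, P (a, b) with hA
  set B : β → ℝ := fun b => ∑' a, P (a, b) with hB
  have hAs : ∀ a, A a = ∑ b ∈ t, P (a, b) := by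
    intro a
    exact tsum_eq_sum (fun b hb => by
      by_contra h; exact hb (hmem (a, b) h).2)
  have hBs : ∀ b, B b = ∑ a ∈ s, P (a, b) := by
    intro b
    exact tsum_eq_sum (fun a ha => by
      by_contra h; exact ha (hmem (a, b) h).1)
  have hAz : ∀ a ∉ s, A a = 0 := by
    intro a ha
    rw [hAs]
    exact Finset.sum_eq_zero (fun b _ => by
      by_contra h; exact ha (hmem (a, b) h).1)
  have hBz : ∀ b ∉ t, B b = 0 := by
    intro b hb
    rw [hBs]
    exact Finset.sum_eq_zero (fun a _ => by
      by_contra h; exact hb (hmem (a, b) h).2)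
  have hAnn : ∀ a, 0 ≤ A a := fun a => by
    rw [hAs]; exact Finset.sum_nonneg fun b _ => hnn _
  have hBnn : ∀ b, 0 ≤ B b := fun b => by
    rw [hBs]; exact Finset.sum_nonneg fun a _ => hnn _
  have htot' : ∑ w ∈ s ×ˢ t, P w = 1 := by rw [← htot]; exact (tsum_eq_sum hz).symm
  have hAtot : ∑ a ∈ s, A a = 1 := by
    rw [← htot', Finset.sum_product]
    exact Finset.sum_congr rfl fun a _ => (hAs a).symm ▸ rfl
  have hBtot : ∑ b ∈ t, B b = 1 := by
    rw [← htot', Finset.sum_product_right]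
    exact Finset.sum_congr rfl fun b _ => (hBs b).symm ▸ rfl
  -- pointwise Gibbs inequality
  have key : ∀ w ∈ s ×ˢ t, Real.negMulLog (P w) + P w * Real.log (A w.1)
      + P w * Real.log (B w.2) ≤ A w.1 * B w.2 - P w := by
    rintro ⟨a, b⟩ _
    by_cases hP : P (a, b) = 0
    · simp only [hP, Real.negMulLog_zero, zero_mul, add_zero, sub_zero, zero_add]
      exact mul_nonneg (hAnn a) (hBnn b)
    · have hPpos : 0 < P (a, b) := lt_of_le_of_ne (hnn _) (Ne.symm hP)
      have hAp : P (a, b) ≤ A a := by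
        rw [hAs]
        exact Finset.single_le_sum (fun b' _ => hnn (a, b')) (hmem (a, b) hP).2
      have hBp : P (a, b) ≤ B b := by
        rw [hBs]
        exact Finset.single_le_sum (fun a' _ => hnn (a', b)) (hmem (a, b) hP).1
      have hApos : 0 < A a := lt_of_lt_of_le hPpos hAp
      have hBpos : 0 < B b := lt_of_lt_of_le hPpos hBp
      have hlog : Real.log (A a * B b / P (a, b)) ≤ A a * B b / P (a, b) - 1 :=
        Real.log_le_sub_one_of_pos (by positivity)
      have hexp : Real.log (A a * B b / P (a, b))
          = Real.log (A a) + Real.log (B b) - Real.log (P (a, b)) := by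
        rw [Real.log_div (by positivity) hP, Real.log_mul hApos.ne' hBpos.ne']
      have h2 : P (a, b) * Real.log (A a * B b / P (a, b))
          ≤ P (a, b) * (A a * B b / P (a, b) - 1) :=
        mul_le_mul_of_nonneg_left hlog (hnn _)
      rw [hexp] at h2
      have h3 : P (a, b) * (A a * B b / P (a, b) - 1) = A a * B b - P (a, b) := by
        field_simp
      rw [h3] at h2
      have : Real.negMulLog (P (a, b)) = -(P (a, b) * Real.log (P (a, b))) := by
        simp [Real.negMulLog, neg_mul]
      nlinarith [h2]
  have hsum := Finset.sum_le_sum key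
  rw [Finset.sum_sub_distrib, htot'] at hsum
  have e1 : ∑ w ∈ s ×ˢ t, A w.1 * B w.2 = 1 := by
    rw [Finset.sum_product]
    have h : ∀ a ∈ s, ∑ b ∈ t, A (a, b).1 * B (a, b).2 = A a := by
      intro a _
      show ∑ b ∈ t, A a * B b = A a
      rw [← Finset.mul_sum, hBtot, mul_one]
    rw [Finset.sum_congr rfl h, hAtot]
  have e2 : ∑ w ∈ s ×ˢ t, P w * Real.log (A w.1) = -entC A := by
    rw [Finset.sum_product, entC_eq_sum hAz]
    rw [← Finset.sum_neg_distrib]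
    refine Finset.sum_congr rfl fun a _ => ?_
    show ∑ b ∈ t, P (a, b) * Real.log (A a) = -Real.negMulLog (A a)
    rw [← Finset.sum_mul, ← hAs a]
    simp [Real.negMulLog, neg_mul]
  have e3 : ∑ w ∈ s ×ˢ t, P w * Real.log (B w.2) = -entC B := by
    rw [Finset.sum_product_right, entC_eq_sum hBz]
    rw [← Finset.sum_neg_distrib]
    refine Finset.sum_congr rfl fun b _ => ?_
    show ∑ a ∈ s, P (a, b) * Real.log (B b) = -Real.negMulLog (B b)
    rw [← Finset.sum_mul, ← hBs b]
    simp [Real.negMulLog, neg_mul]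
  have e0 : entC P = ∑ w ∈ s ×ˢ t, Real.negMulLog (P w) := entC_eq_sum hz
  rw [Finset.sum_add_distrib, Finset.sum_add_distrib, e2, e3, e1, ← e0] at hsum
  linarith


end Helpers

def eqRXU (𝒰 : Type*) : ℕ × (𝒰 × ℕ) ≃ 𝒰 × ℕ × ℕ :=
  ⟨fun w => (w.2.1, w.1, w.2.2), fun t => (t.2.1, (t.1, t.2.2)),
    fun _ => rfl, fun _ => rfl⟩

lemma unpair_pairEquiv (w : ℕ × ℕ) : Nat.unpair (Nat.pairEquiv w) = w := by
  show Nat.unpair (Nat.pair w.1 w.2) = w; exact Nat.unpair_pair w.1 w.2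

lemma tsum_unpair_mul {f g : ℕ → ℝ} (hf : (Function.support f).Finite)
    (hg : (Function.support g).Finite) :
    ∑' x : ℕ, f x.unpair.1 * g x.unpair.2 = (∑' x, f x) * (∑' x, g x) := by
  have e := Nat.pairEquiv.tsum_eq (fun x : ℕ => f x.unpair.1 * g x.unpair.2)
  have e' : ∑' w : ℕ × ℕ, f w.1 * g w.2
      = ∑' x : ℕ, f x.unpair.1 * g x.unpair.2 := by
    rw [← e]
    exact tsum_congr fun w => by rw [unpair_pairEquiv]
  rw [← e']
  have hfin : (Function.support fun w : ℕ × ℕ => f w.1 * g w.2).Finite := by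
    refine Set.Finite.subset (hf.prod hg) ?_
    intro w hw
    constructor
    · exact fun h0 => hw (by simp [h0])
    · exact fun h0 => hw (by simp [h0])
  rw [tsum_prod_fs hfin]
  rw [tsum_congr (fun a => tsum_mul_left (f := fun b => g b) (a := f a))]
  rw [tsum_mul_right]

lemma entC_pair_mul {f g : ℕ → ℝ}
    (hf : (Function.support f).Finite) (hg : (Function.support g).Finite)
    (hf1 : ∑' a, f a = 1) (hg1 : ∑' b, g b = 1) :
    entC (fun x : ℕ => f x.unpair.1 * g x.unpair.2) = entC f + entC g := by
  have h1 : entC (fun w : ℕ × ℕ => f w.1 * g w.2)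
      = entC (fun x : ℕ => f x.unpair.1 * g x.unpair.2) := by
    rw [← entC_comp_equiv Nat.pairEquiv (fun x : ℕ => f x.unpair.1 * g x.unpair.2)]
    exact congrArg entC (funext fun w => by rw [unpair_pairEquiv])
  rw [← h1]
  exact entC_prod hf hg hf1 hg1

def eqPairSnd (α : Type*) : (α × ℕ) × ℕ ≃ α × ℕ :=
  ⟨fun w => (w.1.1, Nat.pair w.1.2 w.2),
   fun t => ((t.1, t.2.unpair.1), t.2.unpair.2),
   fun w => by simp [Nat.unpair_pair],
   fun t => by simp [Nat.pair_unpair]⟩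

lemma entC_mul_pair_snd {α : Type*} {F : α × ℕ → ℝ} {g : ℕ → ℝ}
    (hF : (Function.support F).Finite) (hg : (Function.support g).Finite)
    (hF1 : ∑' w, F w = 1) (hg1 : ∑' b, g b = 1) :
    entC (fun t : α × ℕ => F (t.1, t.2.unpair.1) * g t.2.unpair.2)
      = entC F + entC g := by
  have h1 : entC (fun w : (α × ℕ) × ℕ => F w.1 * g w.2)
      = entC (fun t : α × ℕ => F (t.1, t.2.unpair.1) * g t.2.unpair.2) := by
    rw [← entC_comp_equiv (eqPairSnd α)
      (fun t : α × ℕ => F (t.1, t.2.unpair.1) * g t.2.unpair.2)]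
    refine congrArg entC (funext fun w => ?_)
    show F w.1 * g w.2
        = F (w.1.1, (Nat.pair w.1.2 w.2).unpair.1) * g (Nat.pair w.1.2 w.2).unpair.2
    simp [Nat.unpair_pair]
  rw [← h1]
  exact entC_prod hF hg hF1 hg1

def eqPairThd (α β : Type*) : ((α × β × ℕ) × ℕ) ≃ α × β × ℕ :=
  ⟨fun w => (w.1.1, w.1.2.1, Nat.pair w.1.2.2 w.2),
   fun t => ((t.1, t.2.1, t.2.2.unpair.1), t.2.2.unpair.2),
   fun w => by simp [Nat.unpair_pair],
   fun t => by simp [Nat.pair_unpair]⟩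

lemma entC_mul_pair_thd {α β : Type*} {F : α × β × ℕ → ℝ} {g : ℕ → ℝ}
    (hF : (Function.support F).Finite) (hg : (Function.support g).Finite)
    (hF1 : ∑' w, F w = 1) (hg1 : ∑' b, g b = 1) :
    entC (fun t : α × β × ℕ => F (t.1, t.2.1, t.2.2.unpair.1) * g t.2.2.unpair.2)
      = entC F + entC g := by
  have h1 : entC (fun w : (α × β × ℕ) × ℕ => F w.1 * g w.2)
      = entC (fun t : α × β × ℕ => F (t.1, t.2.1, t.2.2.unpair.1) * g t.2.2.unpair.2) := by
    rw [← entC_comp_equiv (eqPairThd α β)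
      (fun t : α × β × ℕ => F (t.1, t.2.1, t.2.2.unpair.1) * g t.2.2.unpair.2)]
    refine congrArg entC (funext fun w => ?_)
    show F w.1 * g w.2
        = F (w.1.1, w.1.2.1, (Nat.pair w.1.2.2 w.2).unpair.1)
          * g (Nat.pair w.1.2.2 w.2).unpair.2
    simp [Nat.unpair_pair]
  rw [← h1]
  exact entC_prod hF hg hF1 hg1

section FeasibleAPI

variable {𝒰 : Type*} [Fintype 𝒰] {p : 𝒰 → ℕ → ℕ → ℝ}
set_option linter.unusedSectionVars false

-- slice finiteness facts, from finiteness of the joint support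
lemma fin_x (hfin : (Function.support fun t : 𝒰 × ℕ × ℕ => p t.1 t.2.1 t.2.2).Finite)
    (u : 𝒰) (r : ℕ) : (Function.support fun x => p u r x).Finite :=
  Set.Finite.subset (hfin.image (fun t => t.2.2)) (fun x hx => ⟨(u, r, x), hx, rfl⟩)

lemma fin_rx (hfin : (Function.support fun t : 𝒰 × ℕ × ℕ => p t.1 t.2.1 t.2.2).Finite)
    (u : 𝒰) : (Function.support fun v : ℕ × ℕ => p u v.1 v.2).Finite :=
  Set.Finite.subset (hfin.image (fun t => t.2)) (fun v hv => ⟨(u, v.1, v.2), hv, rfl⟩)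

lemma fin_xr (hfin : (Function.support fun t : 𝒰 × ℕ × ℕ => p t.1 t.2.1 t.2.2).Finite)
    (u : 𝒰) : (Function.support fun v : ℕ × ℕ => p u v.2 v.1).Finite :=
  Set.Finite.subset (hfin.image (fun t => (t.2.2, t.2.1)))
    (fun v hv => ⟨(u, v.2, v.1), hv, rfl⟩)

lemma fin_ux (hfin : (Function.support fun t : 𝒰 × ℕ × ℕ => p t.1 t.2.1 t.2.2).Finite)
    (r : ℕ) : (Function.support fun w : 𝒰 × ℕ => p w.1 r w.2).Finite :=
  Set.Finite.subset (hfin.image (fun t => (t.1, t.2.2)))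
    (fun w hw => ⟨(w.1, r, w.2), hw, rfl⟩)

-- marginal support facts
lemma fin_margUX (hfin : (Function.support fun t : 𝒰 × ℕ × ℕ => p t.1 t.2.1 t.2.2).Finite) :
    (Function.support fun w : 𝒰 × ℕ => ∑' r, p w.1 r w.2).Finite := by
  refine Set.Finite.subset (hfin.image (fun t => (t.1, t.2.2))) ?_
  intro w hw
  obtain ⟨r, hr⟩ := tsum_ne_zero_imp hw
  exact ⟨(w.1, r, w.2), hr, rfl⟩

lemma fin_margXgivenU
    (hfin : (Function.support fun t : 𝒰 × ℕ × ℕ => p t.1 t.2.1 t.2.2).Finite) (u : 𝒰) :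
    (Function.support fun x : ℕ => ∑' r, p u r x).Finite := by
  refine Set.Finite.subset (hfin.image (fun t => t.2.2)) ?_
  intro x hx
  obtain ⟨r, hr⟩ := tsum_ne_zero_imp hx
  exact ⟨(u, r, x), hr, rfl⟩

lemma fin_margX (hfin : (Function.support fun t : 𝒰 × ℕ × ℕ => p t.1 t.2.1 t.2.2).Finite) :
    (Function.support fun x : ℕ => ∑' u : 𝒰, ∑' r, p u r x).Finite := by
  refine Set.Finite.subset (hfin.image (fun t => t.2.2)) ?_
  intro x hx
  obtain ⟨u, hu⟩ := tsum_ne_zero_imp hx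
  obtain ⟨r, hr⟩ := tsum_ne_zero_imp hu
  exact ⟨(u, r, x), hr, rfl⟩

-- swapping the r and x sums
lemma tsum_swap_rx
    (hfin : (Function.support fun t : 𝒰 × ℕ × ℕ => p t.1 t.2.1 t.2.2).Finite) (u : 𝒰) :
    ∑' x, ∑' r, p u r x = ∑' r, ∑' x, p u r x := by
  have h1 := tsum_prod_fs (fin_rx hfin u)
  have h2 := tsum_prod_fs (fin_xr hfin u)
  have h3 : ∑' v : ℕ × ℕ, p u v.2 v.1 = ∑' v : ℕ × ℕ, p u v.1 v.2 := by
    exact (Equiv.prodComm ℕ ℕ).tsum_eq (fun v : ℕ × ℕ => p u v.1 v.2)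
  rw [← h2, h3, h1]

lemma tsum_triple {PU : 𝒰 → ℝ} (hsum : ∑ u, PU u = 1)
    (hfin : (Function.support fun t : 𝒰 × ℕ × ℕ => p t.1 t.2.1 t.2.2).Finite)
    (hmarg : ∀ u, (∑' (r : ℕ), ∑' (x : ℕ), p u r x) = PU u) :
    ∑' t : 𝒰 × ℕ × ℕ, p t.1 t.2.1 t.2.2 = 1 := by
  calc ∑' t : 𝒰 × ℕ × ℕ, p t.1 t.2.1 t.2.2
      = ∑' u : 𝒰, ∑' v : ℕ × ℕ, p u v.1 v.2 := tsum_prod_fs hfin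
    _ = ∑' u : 𝒰, ∑' r, ∑' x, p u r x := tsum_congr fun u => tsum_prod_fs (fin_rx hfin u)
    _ = ∑ u : 𝒰, ∑' r, ∑' x, p u r x := tsum_fintype _
    _ = ∑ u : 𝒰, PU u := Finset.sum_congr rfl fun u _ => hmarg u
    _ = 1 := hsum

lemma tsum_margUX {PU : 𝒰 → ℝ} (hsum : ∑ u, PU u = 1)
    (hfin : (Function.support fun t : 𝒰 × ℕ × ℕ => p t.1 t.2.1 t.2.2).Finite)
    (hmarg : ∀ u, (∑' (r : ℕ), ∑' (x : ℕ), p u r x) = PU u) :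
    ∑' w : 𝒰 × ℕ, ∑' r, p w.1 r w.2 = 1 := by
  calc ∑' w : 𝒰 × ℕ, ∑' r, p w.1 r w.2
      = ∑' u : 𝒰, ∑' x, ∑' r, p u r x := tsum_prod_fs (fin_margUX hfin)
    _ = ∑' u : 𝒰, ∑' r, ∑' x, p u r x := tsum_congr fun u => tsum_swap_rx hfin u
    _ = ∑ u : 𝒰, ∑' r, ∑' x, p u r x := tsum_fintype _
    _ = 1 := by rw [Finset.sum_congr rfl fun u _ => hmarg u]; exact hsum

lemma tsum_margX {PU : 𝒰 → ℝ} (hsum : ∑ u, PU u = 1)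
    (hfin : (Function.support fun t : 𝒰 × ℕ × ℕ => p t.1 t.2.1 t.2.2).Finite)
    (hmarg : ∀ u, (∑' (r : ℕ), ∑' (x : ℕ), p u r x) = PU u) :
    ∑' x : ℕ, ∑' u : 𝒰, ∑' r, p u r x = 1 := by
  have h1 : ∀ x : ℕ, ∑' u : 𝒰, ∑' r, p u r x = ∑ u : 𝒰, ∑' r, p u r x :=
    fun x => tsum_fintype _
  rw [tsum_congr h1]
  rw [Summable.tsum_finsetSum (fun u _ => summable_fs (fin_margXgivenU hfin u))]
  rw [Finset.sum_congr rfl fun u _ => tsum_swap_rx hfin u]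
  rw [Finset.sum_congr rfl fun u _ => hmarg u]
  exact hsum

lemma keyCost_nonneg {PU : 𝒰 → ℝ} {γ : ℝ} (hsum : ∑ u, PU u = 1)
    (hF : Feasible PU γ p) : 0 ≤ keyCost p := by
  obtain ⟨hnn, hfin, hmarg, -⟩ := hF
  have hPC : entC (fun w : ℕ × (𝒰 × ℕ) => p w.2.1 w.1 w.2.2)
      = entC (fun t : 𝒰 × ℕ × ℕ => p t.1 t.2.1 t.2.2) := by
    exact entC_comp_equiv (eqRXU 𝒰) (fun t : 𝒰 × ℕ × ℕ => p t.1 t.2.1 t.2.2)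
  have hPfin : (Function.support fun w : ℕ × (𝒰 × ℕ) => p w.2.1 w.1 w.2.2).Finite := by
    refine Set.Finite.subset (hfin.image (fun t => (t.2.1, (t.1, t.2.2)))) ?_
    intro w hw
    exact ⟨(w.2.1, w.1, w.2.2), hw, rfl⟩
  have hPtot : ∑' w : ℕ × (𝒰 × ℕ), p w.2.1 w.1 w.2.2 = 1 := by
    rw [← tsum_triple hsum hfin hmarg]
    exact (eqRXU 𝒰).tsum_eq (fun t : 𝒰 × ℕ × ℕ => p t.1 t.2.1 t.2.2)
  have hsub := entC_subadd (P := fun w : ℕ × (𝒰 × ℕ) => p w.2.1 w.1 w.2.2)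
    (fun w => hnn _ _ _) hPfin hPtot
  have hsub2 : entC (fun t : 𝒰 × ℕ × ℕ => p t.1 t.2.1 t.2.2)
      ≤ entC (fun a : ℕ => ∑' b : 𝒰 × ℕ, p b.1 a b.2)
        + entC (fun t : 𝒰 × ℕ => ∑' r, p t.1 r t.2) := by
    rw [← hPC]; exact hsub
  have hM1 : entC (fun a : ℕ => ∑' b : 𝒰 × ℕ, p b.1 a b.2)
      = entC (fun r : ℕ => ∑' (u : 𝒰), ∑' (x : ℕ), p u r x) := by
    refine congrArg entC (funext fun r => ?_)
    exact tsum_prod_fs (fin_ux hfin r)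
  rw [hM1] at hsub2
  unfold keyCost
  linarith


lemma ext_feasible {PU : 𝒰 → ℝ} {γ : ℝ} (hsum : ∑ u, PU u = 1)
    (hF : Feasible PU γ p) {q : ℕ → ℝ} (hq0 : ∀ i, 0 ≤ q i)
    (hqfin : (Function.support q).Finite) (hq1 : ∑' i, q i = 1) :
    Feasible PU (γ + entC q) (fun u r x => p u r x.unpair.1 * q x.unpair.2)
      ∧ keyCost (fun u r x => p u r x.unpair.1 * q x.unpair.2) = keyCost p := by
  obtain ⟨hnn, hfin, hmarg, hXU, hRU, ⟨g, hg⟩, hHX⟩ := hF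
  set p' : 𝒰 → ℕ → ℕ → ℝ := fun u r x => p u r x.unpair.1 * q x.unpair.2 with hp'
  -- basic computations
  have hx1 : ∀ u r, ∑' x, p' u r x = ∑' x, p u r x := by
    intro u r
    rw [hp']
    rw [tsum_unpair_mul (fin_x hfin u r) hqfin, hq1, mul_one]
  have hr1 : ∀ u x, ∑' r, p' u r x = (∑' r, p u r x.unpair.1) * q x.unpair.2 :=
    fun u x => tsum_mul_right
  have hpX' : ∀ x, (∑' u : 𝒰, ∑' r, p' u r x)
      = (∑' u : 𝒰, ∑' r, p u r x.unpair.1) * q x.unpair.2 := by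
    intro x
    rw [tsum_congr (fun u => hr1 u x), tsum_mul_right]
  -- totals for p
  have hBtot : ∑' w : 𝒰 × ℕ, ∑' r, p w.1 r w.2 = 1 := tsum_margUX hsum hfin hmarg
  have hCtot : ∑' t : 𝒰 × ℕ × ℕ, p t.1 t.2.1 t.2.2 = 1 := tsum_triple hsum hfin hmarg
  have hXtot : ∑' x : ℕ, ∑' u : 𝒰, ∑' r, p u r x = 1 := tsum_margX hsum hfin hmarg
  constructor
  · refine ⟨?_, ?_, ?_, ?_, ?_, ?_, ?_⟩
    · exact fun u r x => mul_nonneg (hnn _ _ _) (hq0 _)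
    · refine Set.Finite.subset ((hfin.prod hqfin).image
        (fun w : (𝒰 × ℕ × ℕ) × ℕ => (w.1.1, w.1.2.1, Nat.pair w.1.2.2 w.2))) ?_
      intro t ht
      have h1 : p t.1 t.2.1 t.2.2.unpair.1 ≠ 0 ∧ q t.2.2.unpair.2 ≠ 0 :=
        mul_ne_zero_iff.1 ht
      refine ⟨((t.1, t.2.1, t.2.2.unpair.1), t.2.2.unpair.2), ⟨h1.1, h1.2⟩, ?_⟩
      simp [Nat.pair_unpair]
    · intro u
      rw [tsum_congr (fun r => hx1 u r)]
      exact hmarg u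
    · intro u x
      rw [hr1 u x, hXU u x.unpair.1, hpX' x]
      ring
    · intro u r
      rw [hx1 u r, tsum_congr (fun u' => hx1 u' r)]
      exact hRU u r
    · refine ⟨fun r x => g r x.unpair.1, fun u r x h => ?_⟩
      exact hg u r x.unpair.1 (mul_ne_zero_iff.1 h).1
    · have hfun : (fun x : ℕ => ∑' u : 𝒰, ∑' r, p' u r x)
          = fun x : ℕ => (∑' u : 𝒰, ∑' r, p u r x.unpair.1) * q x.unpair.2 :=
        funext hpX'
      rw [hfun]
      have := entC_pair_mul (f := fun x : ℕ => ∑' u : 𝒰, ∑' r, p u r x)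
        (fin_margX hfin) hqfin hXtot hq1
      rw [this, hHX]
      ring
  · -- key cost is unchanged
    unfold keyCost
    have t1 : entC (fun r : ℕ => ∑' u : 𝒰, ∑' x, p' u r x)
        = entC (fun r : ℕ => ∑' u : 𝒰, ∑' x, p u r x) := by
      refine congrArg entC (funext fun r => ?_)
      exact tsum_congr fun u => hx1 u r
    have t2 : entC (fun t : 𝒰 × ℕ => ∑' r, p' t.1 r t.2)
        = entC (fun w : 𝒰 × ℕ => ∑' r, p w.1 r w.2) + entC q := by
      have hfun : (fun t : 𝒰 × ℕ => ∑' r, p' t.1 r t.2)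
          = fun t : 𝒰 × ℕ => (fun w : 𝒰 × ℕ => ∑' r, p w.1 r w.2) (t.1, t.2.unpair.1)
              * q t.2.unpair.2 :=
        funext fun t => hr1 t.1 t.2
      rw [hfun]
      exact entC_mul_pair_snd (fin_margUX hfin) hqfin hBtot hq1
    have t3 : entC (fun t : 𝒰 × ℕ × ℕ => p' t.1 t.2.1 t.2.2)
        = entC (fun t : 𝒰 × ℕ × ℕ => p t.1 t.2.1 t.2.2) + entC q := by
      have hfun : (fun t : 𝒰 × ℕ × ℕ => p' t.1 t.2.1 t.2.2)
          = fun t : 𝒰 × ℕ × ℕ =>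
              (fun s : 𝒰 × ℕ × ℕ => p s.1 s.2.1 s.2.2) (t.1, t.2.1, t.2.2.unpair.1)
                * q t.2.2.unpair.2 := rfl
      rw [hfun]
      exact entC_mul_pair_thd hfin hqfin hCtot hq1
    rw [t1, t2, t3]
    ring

end FeasibleAPI

section Base

variable {𝒰 : Type*} [Fintype 𝒰]
set_option linter.unusedSectionVars false

set_option maxHeartbeats 1000000 in
lemma base_feasible (PU : 𝒰 → ℝ) (hnn : ∀ u, 0 ≤ PU u) (hsum : ∑ u, PU u = 1) :
    ∃ p : 𝒰 → ℕ → ℕ → ℝ, Feasible PU 0 p := by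
  classical
  have hU : ∃ u, PU u ≠ 0 := by
    by_contra hc; push_neg at hc
    rw [Finset.sum_congr rfl (fun u _ => hc u)] at hsum; simp at hsum
  obtain ⟨u₀, hu₀⟩ := hU
  set S : Finset 𝒰 := univ.filter (fun u => PU u ≠ 0) with hS
  set n : ℕ := S.card with hn
  have hn0 : 0 < n := Finset.card_pos.2 ⟨u₀, Finset.mem_filter.2 ⟨Finset.mem_univ _, hu₀⟩⟩
  have hnR : (0:ℝ) < (n:ℝ) := by exact_mod_cast hn0
  set L : List 𝒰 := S.toList with hL
  have hlen : L.length = n := Finset.length_toList S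
  set idx : 𝒰 → ℕ := fun u => L.idxOf u with hidx
  have hidx_lt : ∀ u ∈ S, idx u < n := fun u hu => by
    rw [← hlen]; exact List.idxOf_lt_length_iff.2 (Finset.mem_toList.2 hu)
  set dec : ℕ → 𝒰 := fun v => L.getD v u₀ with hdec
  have hdec_idx : ∀ u ∈ S, dec (idx u) = u := by
    intro u hu
    have hv : idx u < L.length := by rw [hlen]; exact hidx_lt u hu
    show L.getD (idx u) u₀ = u
    rw [List.getD_eq_getElem L u₀ hv]
    exact List.getElem_idxOf hv
  have hSsum : ∑ u ∈ S, PU u = 1 := by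
    rw [hS, Finset.sum_filter_of_ne]
    · exact hsum
    · exact fun x _ h => h
  have hu0 : ∀ u, u ∉ S → PU u = 0 := by
    intro u hu
    by_contra h
    exact hu (Finset.mem_filter.2 ⟨Finset.mem_univ _, h⟩)
  set p : 𝒰 → ℕ → ℕ → ℝ := fun u r x =>
    if u ∈ S ∧ r < n ∧ x = (idx u + r) % n then PU u / n else 0 with hp
  have hmodlt : ∀ y : ℕ, y % n < n := fun y => Nat.mod_lt y hn0
  have cancel : ∀ (a : ℕ) {r r' : ℕ}, r < n → r' < n →
      (a + r) % n = (a + r') % n → r = r' := by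
    intro a r r' hr hr' h
    have h' : a + r ≡ a + r' [MOD n] := h
    have h2 : r % n = r' % n := Nat.ModEq.add_left_cancel' a h'
    rwa [Nat.mod_eq_of_lt hr, Nat.mod_eq_of_lt hr'] at h2
  have exist2 : ∀ {a x : ℕ}, a < n → x < n → (a + (x + n - a) % n) % n = x := by
    intro a x ha hx
    have h1 : a + (x + n - a) % n ≡ a + (x + n - a) [MOD n] :=
      Nat.ModEq.add_left a (Nat.mod_modEq (x + n - a) n)
    have h2 : (a + (x + n - a) % n) % n = (a + (x + n - a)) % n := h1
    have h3 : a + (x + n - a) = x + n := by omega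
    rw [h2, h3, Nat.add_mod_right, Nat.mod_eq_of_lt hx]
  have helper1 : ∀ {a r : ℕ}, a < n → r < n → ((a + r) % n + n - r) % n = a := by
    intro a r ha hr
    have hsum1 : ((a + r) % n + n - r) + r = (a + r) % n + n := by omega
    have h1 : (((a + r) % n + n - r) + r) % n = (a + r) % n := by
      rw [hsum1, Nat.add_mod_right, Nat.mod_mod_of_dvd _ dvd_rfl]
    have h2 : ((a + r) % n + n - r) + r ≡ a + r [MOD n] := by
      show _ % n = _ % n
      rw [h1]
    have h3 : ((a + r) % n + n - r) % n = a % n := Nat.ModEq.add_right_cancel' r h2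
    rwa [Nat.mod_eq_of_lt ha] at h3
  -- marginal computations
  have hAx : ∀ u r, ∑' x, p u r x = if u ∈ S ∧ r < n then PU u / n else 0 := by
    intro u r
    by_cases hc : u ∈ S ∧ r < n
    · rw [if_pos hc]
      rw [tsum_eq_single ((idx u + r) % n) ?_]
      · exact if_pos ⟨hc.1, hc.2, rfl⟩
      · intro x hx
        exact if_neg (fun hcon => hx hcon.2.2)
    · rw [if_neg hc]
      have hz : ∀ x, p u r x = 0 := fun x => if_neg (fun hcon => hc ⟨hcon.1, hcon.2.1⟩)
      rw [tsum_congr hz, tsum_zero]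
  have hBr : ∀ u x, ∑' r, p u r x = if u ∈ S ∧ x < n then PU u / n else 0 := by
    intro u x
    by_cases hc : u ∈ S ∧ x < n
    · obtain ⟨hu, hx⟩ := hc
      have ha := hidx_lt u hu
      rw [if_pos ⟨hu, hx⟩]
      rw [tsum_eq_single ((x + n - idx u) % n) ?_]
      · exact if_pos ⟨hu, hmodlt _, (exist2 ha hx).symm⟩
      · intro r hr
        apply if_neg
        rintro ⟨-, hrn, hxe⟩
        apply hr
        refine cancel (idx u) hrn (hmodlt _) ?_
        rw [← hxe]
        exact (exist2 ha hx).symm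
    · rw [if_neg hc]
      have hz : ∀ r, p u r x = 0 := by
        intro r
        apply if_neg
        rintro ⟨hu, hrn, hxe⟩
        rcases not_and_or.1 hc with h | h
        · exact h hu
        · exact h (hxe ▸ hmodlt _)
      rw [tsum_congr hz, tsum_zero]
  have hsum_ite : ∀ c : Prop, ∀ _ : Decidable c,
      (∑ u : 𝒰, if u ∈ S ∧ c then PU u / n else 0) = if c then 1 / (n:ℝ) else 0 := by
    intro c hc
    by_cases h : c
    · rw [if_pos h]
      have he : ∀ u ∈ univ, (if u ∈ S ∧ c then PU u / (n:ℝ) else 0)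
          = if u ∈ S then PU u / n else 0 := by
        intro u _
        by_cases hu : u ∈ S <;> simp [hu, h]
      rw [Finset.sum_congr rfl he, Finset.sum_ite_mem, Finset.univ_inter,
        ← Finset.sum_div, hSsum]
    · rw [if_neg h]
      exact Finset.sum_eq_zero fun u _ => if_neg (fun hcon => h hcon.2)
  have hPX : ∀ x, (∑' u : 𝒰, ∑' r, p u r x) = if x < n then 1 / (n:ℝ) else 0 := by
    intro x
    rw [tsum_fintype, Finset.sum_congr rfl (fun u _ => hBr u x), hsum_ite _ _]
  have hPR : ∀ r, (∑' u : 𝒰, ∑' x, p u r x) = if r < n then 1 / (n:ℝ) else 0 := by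
    intro r
    rw [tsum_fintype, Finset.sum_congr rfl (fun u _ => hAx u r), hsum_ite _ _]
  refine ⟨p, ?_, ?_, ?_, ?_, ?_, ?_, ?_⟩
  · intro u r x
    rw [hp]
    dsimp only
    split_ifs
    · exact div_nonneg (hnn u) hnR.le
    · exact le_rfl
  · refine Set.Finite.subset (Set.finite_univ.prod
      ((Set.finite_Iio n).prod (Set.finite_Iio n))) ?_
    intro t ht
    have hcond : t.1 ∈ S ∧ t.2.1 < n ∧ t.2.2 = (idx t.1 + t.2.1) % n := by
      by_contra h; exact ht (if_neg h)
    exact ⟨Set.mem_univ _, hcond.2.1, hcond.2.2 ▸ hmodlt _⟩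
  · intro u
    rw [tsum_congr (fun r => hAx u r)]
    by_cases hu : u ∈ S
    · rw [tsum_eq_sum (s := Finset.range n)
        (fun r hr => if_neg (fun hcon => hr (Finset.mem_range.2 hcon.2)))]
      have he : ∀ r ∈ Finset.range n,
          (if u ∈ S ∧ r < n then PU u / (n:ℝ) else 0) = PU u / n :=
        fun r hr => if_pos ⟨hu, Finset.mem_range.1 hr⟩
      rw [Finset.sum_congr rfl he, Finset.sum_const, Finset.card_range, nsmul_eq_mul,
        mul_comm, div_mul_cancel₀ _ hnR.ne']
    · have hz : ∀ r : ℕ, (if u ∈ S ∧ r < n then PU u / (n:ℝ) else 0) = 0 :=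
        fun r => if_neg (fun hcon => hu hcon.1)
      rw [tsum_congr hz, tsum_zero, hu0 u hu]
  · intro u x
    rw [hBr u x, hPX x]
    by_cases hx : x < n
    · by_cases hu : u ∈ S
      · rw [if_pos ⟨hu, hx⟩, if_pos hx]; ring
      · rw [if_neg (fun hc => hu hc.1), if_pos hx, hu0 u hu, zero_mul]
    · rw [if_neg (fun hc => hx hc.2), if_neg hx, mul_zero]
  · intro u r
    rw [hAx u r, tsum_congr (fun u' => hAx u' r)]
    rw [show (∑' u' : 𝒰, if u' ∈ S ∧ r < n then PU u' / (n:ℝ) else 0)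
        = if r < n then 1 / (n:ℝ) else 0 from by
      rw [tsum_fintype]; exact hsum_ite _ _]
    by_cases hr : r < n
    · by_cases hu : u ∈ S
      · rw [if_pos ⟨hu, hr⟩, if_pos hr]; ring
      · rw [if_neg (fun hc => hu hc.1), if_pos hr, hu0 u hu, zero_mul]
    · rw [if_neg (fun hc => hr hc.2), if_neg hr, mul_zero]
  · refine ⟨fun r x => dec ((x + n - r) % n), ?_⟩
    intro u r x h
    have hcond : u ∈ S ∧ r < n ∧ x = (idx u + r) % n := by
      by_contra hc; exact h (if_neg hc)
    obtain ⟨hu, hrn, hxe⟩ := hcond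
    have heq : (x + n - r) % n = idx u := by
      rw [hxe]; exact helper1 (hidx_lt u hu) hrn
    show u = dec ((x + n - r) % n)
    rw [heq]
    exact (hdec_idx u hu).symm
  · rw [show (fun x : ℕ => ∑' u : 𝒰, ∑' r, p u r x)
        = (fun x : ℕ => if x < n then 1 / (n:ℝ) else 0) from funext hPX]
    rw [entC_eq_sum (s := Finset.range n)
      (fun x hx => if_neg (fun h => hx (Finset.mem_range.2 h)))]
    have he : ∀ x ∈ Finset.range n,
        Real.negMulLog (if x < n then 1/(n:ℝ) else 0) = Real.negMulLog (1/(n:ℝ)) :=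
      fun x hx => by rw [if_pos (Finset.mem_range.1 hx)]
    rw [Finset.sum_congr rfl he, Finset.sum_const, Finset.card_range, nsmul_eq_mul]
    have hcard : (univ.filter fun u => PU u ≠ 0).card = n := rfl
    rw [hcard, Real.negMulLog, Real.log_div one_ne_zero hnR.ne', Real.log_one]
    have hmul : (n:ℝ) * (-(1/(n:ℝ)) * (0 - Real.log n)) = ((n:ℝ) * (1/(n:ℝ))) * Real.log n := by
      ring
    rw [hmul, mul_one_div_cancel hnR.ne', one_mul, add_zero]

end Base

-- existence of a finitely supported pmf on ℕ with prescribed entropy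
lemma exists_pmf_entropy {γ : ℝ} (hγ : 0 ≤ γ) :
    ∃ q : ℕ → ℝ, (∀ i, 0 ≤ q i) ∧ (Function.support q).Finite ∧
      (∑' i, q i) = 1 ∧ entC q = γ := by
  classical
  set m : ℕ := ⌈Real.exp γ⌉₊ with hm
  have hm1 : 1 ≤ m := Nat.one_le_ceil_iff.2 (Real.exp_pos γ)
  have hmR : (0:ℝ) < m := by exact_mod_cast hm1
  have hγm : γ ≤ Real.log m := by
    have h1 : Real.exp γ ≤ m := Nat.le_ceil _
    calc γ = Real.log (Real.exp γ) := (Real.log_exp γ).symm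
    _ ≤ Real.log m := Real.log_le_log (Real.exp_pos γ) h1
  set Q : ℝ → ℕ → ℝ := fun t i =>
    if i = 0 then 1 - t + t / m else if i < m then t / m else 0 with hQ
  have hQsupp : ∀ t, ∀ i ∉ Finset.range m, Q t i = 0 := by
    intro t i hi
    rw [Finset.mem_range, not_lt] at hi
    have hi0 : i ≠ 0 := by omega
    simp [hQ, hi0, Nat.not_lt.2 hi]
  set E : ℝ → ℝ := fun t => ∑ i ∈ Finset.range m, Real.negMulLog (Q t i) with hE
  have hEcont : Continuous E := by
    apply continuous_finset_sum
    intro i _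
    apply Real.continuous_negMulLog.comp
    by_cases hi : i = 0
    · simp only [hQ, hi, if_pos rfl]
      fun_prop
    · by_cases hi2 : i < m
      · simp only [hQ, if_neg hi, if_pos hi2]; fun_prop
      · simp only [hQ, if_neg hi, if_neg hi2]; exact continuous_const
  have hE0 : E 0 = 0 := by
    apply Finset.sum_eq_zero
    intro i _
    by_cases hi : i = 0
    · simp [hQ, hi]
    · by_cases hi2 : i < m <;> simp [hQ, hi, hi2]
  have hE1 : E 1 = Real.log m := by
    show ∑ i ∈ Finset.range m, Real.negMulLog (Q 1 i) = Real.log m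
    have hQ1 : ∀ i ∈ Finset.range m, Q 1 i = 1 / m := by
      intro i hi
      rw [Finset.mem_range] at hi
      by_cases h0 : i = 0 <;> simp [hQ, h0, hi]
    rw [Finset.sum_congr rfl (fun i hi => by rw [hQ1 i hi])]
    rw [Finset.sum_const, Finset.card_range, nsmul_eq_mul]
    rw [Real.negMulLog, Real.log_div one_ne_zero hmR.ne', Real.log_one]
    field_simp
    ring
  have hmem : γ ∈ Set.Icc (E 0) (E 1) := by rw [hE0, hE1]; exact ⟨hγ, hγm⟩
  obtain ⟨t, ht01, htγ⟩ := intermediate_value_Icc zero_le_one hEcont.continuousOn hmem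
  obtain ⟨ht0, ht1⟩ := ht01
  refine ⟨Q t, ?_, ?_, ?_, ?_⟩
  · intro i
    by_cases hi : i = 0
    · have : 0 ≤ t / m := div_nonneg ht0 hmR.le
      simp only [hQ, hi, if_pos rfl]
      linarith
    · by_cases hi2 : i < m <;> simp [hQ, hi, hi2] <;> positivity
  · exact Set.Finite.subset (Finset.range m).finite_toSet
      (fun i hi => by by_contra h; exact hi (hQsupp t i h))
  · rw [tsum_eq_sum (hQsupp t)]
    have : ∀ i ∈ Finset.range m, Q t i
        = (if i = 0 then 1 - t else 0) + t / m := by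
      intro i hi
      rw [Finset.mem_range] at hi
      by_cases h0 : i = 0 <;> simp [hQ, h0, hi]
    rw [Finset.sum_congr rfl this, Finset.sum_add_distrib, Finset.sum_ite_eq'
      (Finset.range m) 0 (fun _ => 1 - t)]
    simp only [Finset.mem_range, Finset.sum_const, Finset.card_range, nsmul_eq_mul]
    rw [if_pos (by omega)]
    field_simp
    ring
  · rw [entC_eq_sum (hQsupp t)]; exact htγ


/-- For every `γ ≥ 0` the feasible set is non-empty, and
`f(γ) = inf { I(R;U,X) }` over the feasible set is non-increasing on
`[0,∞)`. -/

theorem stmt_19 {𝒰 : Type*} [Fintype 𝒰] (PU : 𝒰 → ℝ)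
    (hnn : ∀ u, 0 ≤ PU u) (hsum : ∑ u, PU u = 1) :
    (∀ γ : ℝ, 0 ≤ γ →
      {c : ℝ | ∃ p : 𝒰 → ℕ → ℕ → ℝ, Feasible PU γ p ∧ c = keyCost p}.Nonempty)
    ∧ (∀ γ₁ γ₂ : ℝ, 0 ≤ γ₁ → γ₁ ≤ γ₂ →
        sInf {c : ℝ | ∃ p : 𝒰 → ℕ → ℕ → ℝ, Feasible PU γ₂ p ∧ c = keyCost p}
          ≤ sInf {c : ℝ | ∃ p : 𝒰 → ℕ → ℕ → ℝ, Feasible PU γ₁ p ∧ c = keyCost p}) := by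
  classical
  obtain ⟨p0, hp0⟩ := base_feasible PU hnn hsum
  have hne : ∀ γ : ℝ, 0 ≤ γ →
      {c : ℝ | ∃ p : 𝒰 → ℕ → ℕ → ℝ, Feasible PU γ p ∧ c = keyCost p}.Nonempty := by
    intro γ hγ
    obtain ⟨q, hq0, hqfin, hq1, hqE⟩ := exists_pmf_entropy hγ
    obtain ⟨hF, -⟩ := ext_feasible hsum hp0 hq0 hqfin hq1
    rw [hqE, zero_add] at hF
    exact ⟨_, _, hF, rfl⟩
  refine ⟨hne, ?_⟩
  intro γ₁ γ₂ h1 h12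
  refine csInf_le_csInf ?_ (hne γ₁ h1) ?_
  · refine ⟨0, ?_⟩
    rintro c ⟨p, hp, rfl⟩
    exact keyCost_nonneg hsum hp
  · rintro c ⟨p, hp, rfl⟩
    obtain ⟨q, hq0, hqfin, hq1, hqE⟩ := exists_pmf_entropy (sub_nonneg.2 h12)
    obtain ⟨hF, hkc⟩ := ext_feasible hsum hp hq0 hqfin hq1
    rw [hqE] at hF
    have heq : γ₁ + (γ₂ - γ₁) = γ₂ := by ring
    rw [heq] at hF
    exact ⟨_, hF, hkc.symm⟩
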